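/- arXiv:2407.15803 — 2 statements merged into one kernel-verified Lean document; each statement's English description precedes it below -/
import Mathlib

section
/- The functions ψ_α(z) = (z₁^{α₁}/√(π α₁!)) (z₂^{α₂}/√(π α₂!)) · exp(½⟨Az, z⟩), for α = (α₁, α₂) ∈ ℕ², form an orthonormal system in H_A; i.e. ∫_{ℂ²} ψ_α(z) conj(ψ_{α'}(z)) exp(-Re⟨Az,z⟩ - |z|²) dλ(z) = δ_{α α'}. -/
open MeasureTheory Real Complex

/-- The quadratic form `⟨Az, z⟩ = β₁z₁² + 2κz₁z₂ + β₂z₂²`. -/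
noncomputable def Qform (β₁ β₂ κ : ℝ) (z : ℂ × ℂ) : ℂ :=
  (β₁ : ℂ) * z.1 ^ 2 + 2 * (κ : ℂ) * z.1 * z.2 + (β₂ : ℂ) * z.2 ^ 2

/-- The functions `ψ_α(z) = z₁^{α₁} z₂^{α₂} / (√(πα₁!)√(πα₂!)) · exp(½⟨Az,z⟩)`. -/
noncomputable def psiA (β₁ β₂ κ : ℝ) (α : ℕ × ℕ) (z : ℂ × ℂ) : ℂ :=
  z.1 ^ α.1 * z.2 ^ α.2 /
    ((Real.sqrt (Real.pi * (Nat.factorial α.1)) : ℂ) *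
      (Real.sqrt (Real.pi * (Nat.factorial α.2)) : ℂ)) *
    Complex.exp (Qform β₁ β₂ κ z / 2)

/-- The weight `exp(-Re⟨Az,z⟩ - |z|²)` of the space `H_A`. -/
noncomputable def weightA (β₁ β₂ κ : ℝ) (z : ℂ × ℂ) : ℝ :=
  Real.exp (-(Qform β₁ β₂ κ z).re - (‖z.1‖ ^ 2 + ‖z.2‖ ^ 2))

/-- Angular integral: `∫_{-π}^{π} e^{i(a-b)θ} dθ = 2π δ_{ab}`. -/
lemma theta_int (a b : ℕ) :
    ∫ θ : ℝ in Set.Ioo (-π) π, Complex.exp (((a:ℂ) - b) * θ * I)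
      = if a = b then ((2 * π : ℝ) : ℂ) else 0 := by
  rcases eq_or_ne a b with h | h
  · subst h
    rw [if_pos rfl]
    simp only [sub_self, zero_mul, Complex.exp_zero]
    rw [setIntegral_const, Real.volume_real_Ioo_of_le (by linarith [pi_pos]), sub_neg_eq_add, ← two_mul,
      real_smul, mul_one]
  · rw [if_neg h]
    have hc : ((a:ℂ) - b) * I ≠ 0 := by
      refine mul_ne_zero ?_ I_ne_zero
      rw [sub_ne_zero]
      exact_mod_cast fun hh : (a:ℂ) = b => h (by exact_mod_cast hh)
    simp_rw [show ∀ θ : ℝ, ((a:ℂ) - b) * θ * I = ((a:ℂ) - b) * I * θ from fun θ => by ring]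
    rw [← integral_Ioc_eq_integral_Ioo,
      ← intervalIntegral.integral_of_le (by linarith [pi_pos] : -π ≤ π),
      integral_exp_mul_complex hc]
    have : Complex.exp (((a:ℂ) - b) * I * π) = Complex.exp (((a:ℂ) - b) * I * (-π)) := by
      rw [Complex.exp_eq_exp_iff_exists_int]
      exact ⟨(a:ℤ) - b, by push_cast; ring⟩
    rw [this]; simp

/-- Radial integral: `∫_0^∞ r^{2n+1} e^{-r²} dr = n!/2`. -/
lemma radial_int (n : ℕ) :
    ∫ r in Set.Ioi (0:ℝ), r ^ (2*n+1) * rexp (-(r^2)) = n.factorial / 2 := by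
  have h1 : ∀ r ∈ Set.Ioi (0:ℝ), r ^ (2*n+1) * rexp (-(r^2))
      = r ^ ((2*n+1 : ℕ) : ℝ) * rexp (-(r ^ (2:ℝ))) := by
    intro r hr
    rw [Real.rpow_natCast, Real.rpow_two]
  rw [setIntegral_congr_fun measurableSet_Ioi h1,
    _root_.integral_rpow_mul_exp_neg_rpow (by norm_num : (0:ℝ) < 2) (by push_cast; linarith)]
  have : (((2*n+1 : ℕ) : ℝ) + 1) / 2 = (n : ℝ) + 1 := by push_cast; ring
  rw [this, Real.Gamma_nat_eq_factorial]
  ring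

/-- One-dimensional Fock orthogonality: `∫_ℂ z^a z̄^b e^{-|z|²} = π a! δ_{ab}`. -/
lemma fock_int (a b : ℕ) :
    ∫ z : ℂ, z ^ a * (starRingEnd ℂ) z ^ b * (rexp (-(‖z‖ ^ 2)) : ℂ)
      = if a = b then ((π * a.factorial : ℝ) : ℂ) else 0 := by
  rw [← Complex.integral_comp_polarCoord_symm, polarCoord_target]
  have step : ∀ p ∈ Set.Ioi (0:ℝ) ×ˢ Set.Ioo (-π) π,
      p.1 • ((Complex.polarCoord.symm p) ^ a
        * (starRingEnd ℂ) (Complex.polarCoord.symm p) ^ b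
        * (rexp (-(‖Complex.polarCoord.symm p‖ ^ 2)) : ℂ))
      = (fun r : ℝ => ((r : ℂ) ^ (a + b + 1) * (rexp (-(r^2)) : ℂ))) p.1
        * (fun θ : ℝ => Complex.exp (((a:ℂ) - b) * θ * I)) p.2 := by
    rintro ⟨r, θ⟩ ⟨hr, hθ⟩
    have hr' : (0:ℝ) < r := hr
    have hsym : Complex.polarCoord.symm (r, θ) = (r : ℂ) * Complex.exp (θ * I) := by
      rw [Complex.polarCoord_symm_apply, Complex.exp_mul_I]
      push_cast
      ring
    have habs : ‖Complex.polarCoord.symm (r, θ)‖ = r := by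
      rw [Complex.norm_polarCoord_symm, abs_of_pos hr']
    rw [habs, hsym]
    simp only [map_mul, ← Complex.exp_conj, map_mul, Complex.conj_I, Complex.conj_ofReal]
    rw [mul_pow, mul_pow, ← Complex.exp_nat_mul, ← Complex.exp_nat_mul, real_smul]
    have he : cexp (↑a * (↑θ * I)) * cexp (↑b * (↑θ * -I)) = cexp ((↑a - ↑b) * ↑θ * I) := by
      rw [← Complex.exp_add]; ring_nf
    show _ = ((r:ℂ) ^ (a + b + 1) * (rexp (-(r^2)) : ℂ)) * cexp (((a:ℂ) - b) * θ * I)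
    rw [← he, pow_add, pow_add, pow_one]
    ring
  rw [setIntegral_congr_fun (measurableSet_Ioi.prod measurableSet_Ioo) step,
    Measure.volume_eq_prod,
    setIntegral_prod_mul (fun r : ℝ => ((r : ℂ) ^ (a + b + 1) * (rexp (-(r^2)) : ℂ)))
      (fun θ : ℝ => Complex.exp (((a:ℂ) - b) * θ * I)), theta_int]
  rcases eq_or_ne a b with h | h
  · subst h
    rw [if_pos rfl, if_pos rfl]
    have h2 : a + a + 1 = 2 * a + 1 := by ring
    have hfe : ∀ r ∈ Set.Ioi (0:ℝ), ((r : ℂ) ^ (a + a + 1) * (rexp (-(r^2)) : ℂ))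
        = ((r ^ (2*a+1) * rexp (-(r^2)) : ℝ) : ℂ) := by
      intro r hr
      push_cast [h2]
      ring
    have : (∫ r in Set.Ioi (0:ℝ), ((r : ℂ) ^ (a + a + 1) * (rexp (-(r^2)) : ℂ)))
        = ((a.factorial / 2 : ℝ) : ℂ) := by
      rw [setIntegral_congr_fun measurableSet_Ioi hfe, ← radial_int a]
      exact integral_ofReal
    rw [this]
    push_cast
    ring
  · rw [if_neg h, if_neg h, mul_zero]

/-- the functions `ψ_α` form an orthonormal system in `H_A`. -/
theorem stmt_5 (β₁ β₂ κ : ℝ) (α α' : ℕ × ℕ) :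
    (∫ z : ℂ × ℂ, psiA β₁ β₂ κ α z * (starRingEnd ℂ) (psiA β₁ β₂ κ α' z) *
        (weightA β₁ β₂ κ z : ℂ)) = if α = α' then 1 else 0 := by
  obtain ⟨a₁, a₂⟩ := α
  obtain ⟨b₁, b₂⟩ := α'
  have key : ∀ z : ℂ × ℂ,
      psiA β₁ β₂ κ (a₁, a₂) z * (starRingEnd ℂ) (psiA β₁ β₂ κ (b₁, b₂) z) *
        (weightA β₁ β₂ κ z : ℂ)
      = ((Real.sqrt (π * a₁.factorial) * Real.sqrt (π * b₁.factorial) : ℝ) : ℂ)⁻¹ *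
        ((Real.sqrt (π * a₂.factorial) * Real.sqrt (π * b₂.factorial) : ℝ) : ℂ)⁻¹ *
        ((fun w : ℂ => w ^ a₁ * (starRingEnd ℂ) w ^ b₁ * (rexp (-(‖w‖ ^ 2)) : ℂ)) z.1 *
         (fun w : ℂ => w ^ a₂ * (starRingEnd ℂ) w ^ b₂ * (rexp (-(‖w‖ ^ 2)) : ℂ)) z.2)
      := by
    intro z
    unfold psiA weightA
    set Q := Qform β₁ β₂ κ z with hQ
    have hexp : cexp (Q / 2) * cexp ((starRingEnd ℂ) Q / 2) *
        ((rexp (-(Q.re) - (‖z.1‖ ^ 2 + ‖z.2‖ ^ 2)) : ℝ) : ℂ)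
        = (rexp (-(‖z.1‖ ^ 2)) : ℂ) * (rexp (-(‖z.2‖ ^ 2)) : ℂ) := by
      rw [Complex.ofReal_exp, Complex.ofReal_exp, Complex.ofReal_exp, ← Complex.exp_add,
        ← Complex.exp_add, ← Complex.exp_add]
      congr 1
      have hadd := Complex.add_conj Q
      push_cast at hadd ⊢
      linear_combination hadd / 2
    simp only [map_mul, map_div₀, map_pow, map_ofNat, Complex.conj_ofReal,
      ← Complex.exp_conj]
    push_cast at hexp ⊢
    linear_combination (z.1 ^ a₁ * ((starRingEnd ℂ) z.1) ^ b₁ * z.2 ^ a₂ *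
      ((starRingEnd ℂ) z.2) ^ b₂ *
      ((Real.sqrt (π * a₁.factorial) : ℂ))⁻¹ * ((Real.sqrt (π * b₁.factorial) : ℂ))⁻¹ *
      ((Real.sqrt (π * a₂.factorial) : ℂ))⁻¹ * ((Real.sqrt (π * b₂.factorial) : ℂ))⁻¹) * hexp
  simp_rw [key]
  rw [integral_const_mul, Measure.volume_eq_prod,
    integral_prod_mul (fun w : ℂ => w ^ a₁ * (starRingEnd ℂ) w ^ b₁ *
        (rexp (-(‖w‖ ^ 2)) : ℂ))
      (fun w : ℂ => w ^ a₂ * (starRingEnd ℂ) w ^ b₂ * (rexp (-(‖w‖ ^ 2)) : ℂ)),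
    fock_int, fock_int]
  by_cases h₁ : a₁ = b₁
  · by_cases h₂ : a₂ = b₂
    · subst h₁; subst h₂
      rw [if_pos rfl, if_pos rfl, if_pos rfl]
      have e₁ : Real.sqrt (π * a₁.factorial) * Real.sqrt (π * a₁.factorial)
          = π * a₁.factorial := Real.mul_self_sqrt (by positivity)
      have e₂ : Real.sqrt (π * a₂.factorial) * Real.sqrt (π * a₂.factorial)
          = π * a₂.factorial := Real.mul_self_sqrt (by positivity)
      rw [e₁, e₂]
      have hne₁ : ((π * a₁.factorial : ℝ) : ℂ) ≠ 0 := by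
        exact_mod_cast ne_of_gt (by positivity : (0:ℝ) < π * a₁.factorial)
      have hne₂ : ((π * a₂.factorial : ℝ) : ℂ) ≠ 0 := by
        exact_mod_cast ne_of_gt (by positivity : (0:ℝ) < π * a₂.factorial)
      push_cast at hne₁ hne₂
      field_simp
      exact div_self (by push_cast; exact mul_ne_zero hne₁ hne₂)
    · rw [if_neg h₂, mul_zero, mul_zero,
        if_neg (show ¬((a₁, a₂) = (b₁, b₂)) from fun hh => h₂ (congrArg Prod.snd hh))]
  · rw [if_neg h₁, zero_mul, mul_zero,
      if_neg (show ¬((a₁, a₂) = (b₁, b₂)) from fun hh => h₁ (congrArg Prod.fst hh))]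
end

section
/- With ψ_α the orthonormal basis of H_A, the differentiation operator a₁(f) = ∂f/∂z₁ satisfies a₁(ψ_{α₁,α₂}) = √α₁ · ψ_{α₁-1,α₂} + β₁√(α₁+1) · ψ_{α₁+1,α₂} + κ√(α₂+1) · ψ_{α₁,α₂+1} (with the first term absent when α₁ = 0). -/
open MeasureTheory Real Complex

lemma sqrt_fact_succ (n : ℕ) :
    Real.sqrt (Real.pi * (Nat.factorial (n+1))) =
      Real.sqrt (n+1) * Real.sqrt (Real.pi * (Nat.factorial n)) := by
  rw [← Real.sqrt_mul (by positivity)]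
  congr 1
  push_cast [Nat.factorial_succ]
  ring

lemma sqrt_fact_pos (n : ℕ) : 0 < Real.sqrt (Real.pi * (Nat.factorial n)) := by
  have : (0:ℝ) < Real.pi * (Nat.factorial n) := by positivity
  exact Real.sqrt_pos.mpr this

/-- the annihilation operator `a₁(f) = ∂f/∂z₁` satisfies
`a₁(ψ_{α₁,α₂}) = √α₁ ψ_{α₁-1,α₂} + β₁√(α₁+1) ψ_{α₁+1,α₂} + κ√(α₂+1) ψ_{α₁,α₂+1}`
(the first term being absent when `α₁ = 0`, since `√0 = 0`). -/
theorem stmt_8 (β₁ β₂ κ : ℝ) (α₁ α₂ : ℕ) (z : ℂ × ℂ) :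
    deriv (fun w : ℂ => psiA β₁ β₂ κ (α₁, α₂) (w, z.2)) z.1 =
      (Real.sqrt α₁ : ℂ) * psiA β₁ β₂ κ (α₁ - 1, α₂) z +
        (β₁ : ℂ) * (Real.sqrt (α₁ + 1) : ℂ) * psiA β₁ β₂ κ (α₁ + 1, α₂) z +
        (κ : ℂ) * (Real.sqrt (α₂ + 1) : ℂ) * psiA β₁ β₂ κ (α₁, α₂ + 1) z := by
  have hQ : HasDerivAt (fun w : ℂ => Qform β₁ β₂ κ (w, z.2) / 2)
      ((β₁:ℂ) * z.1 + (κ:ℂ) * z.2) z.1 := by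
    have h1 : HasDerivAt (fun w : ℂ =>
        (β₁ : ℂ) * w ^ 2 + 2 * (κ : ℂ) * w * z.2 + (β₂ : ℂ) * z.2 ^ 2)
        ((β₁:ℂ) * (2 * z.1) + 2 * (κ:ℂ) * z.2) z.1 := by
      have hp : HasDerivAt (fun w : ℂ => w ^ 2) (2 * z.1) z.1 := by
        simpa using hasDerivAt_pow 2 z.1
      have h2 : HasDerivAt (fun w : ℂ => 2 * (κ:ℂ) * w * z.2) (2 * (κ:ℂ) * z.2) z.1 := by
        simpa [mul_comm, mul_assoc, mul_left_comm] using
          (hasDerivAt_id z.1).const_mul (2 * (κ:ℂ) * z.2)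
      simpa using ((hp.const_mul (β₁:ℂ)).add h2).add_const ((β₂:ℂ) * z.2 ^ 2)
    have := h1.div_const 2
    simp only [Qform] at *
    exact this.congr_deriv (by ring)
  have hexp := hQ.cexp
  set N₁ : ℝ := Real.sqrt (Real.pi * (Nat.factorial α₁)) with hN₁
  set N₂ : ℝ := Real.sqrt (Real.pi * (Nat.factorial α₂)) with hN₂
  have hpow : HasDerivAt (fun w : ℂ => w ^ α₁ * z.2 ^ α₂ / ((N₁:ℂ) * (N₂:ℂ)))
      ((α₁:ℂ) * z.1 ^ (α₁ - 1) * z.2 ^ α₂ / ((N₁:ℂ) * (N₂:ℂ))) z.1 := by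
    simpa [mul_div_assoc] using
      (hasDerivAt_pow α₁ z.1).mul_const ((z.2 ^ α₂) / ((N₁:ℂ) * (N₂:ℂ)))
  have hD := hpow.mul hexp
  have hderiv : deriv (fun w : ℂ => psiA β₁ β₂ κ (α₁, α₂) (w, z.2)) z.1 =
      ((α₁:ℂ) * z.1 ^ (α₁ - 1) * z.2 ^ α₂ / ((N₁:ℂ) * (N₂:ℂ))) *
        Complex.exp (Qform β₁ β₂ κ (z.1, z.2) / 2) +
      (z.1 ^ α₁ * z.2 ^ α₂ / ((N₁:ℂ) * (N₂:ℂ))) *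
        (Complex.exp (Qform β₁ β₂ κ (z.1, z.2) / 2) * ((β₁:ℂ) * z.1 + (κ:ℂ) * z.2)) := by
    apply HasDerivAt.deriv
    exact hD
  rw [hderiv]
  clear hD hpow hexp hQ hderiv
  rw [hN₁, hN₂]
  have hz : z = (z.1, z.2) := rfl
  rw [hz]
  simp only [psiA]
  have hE := Complex.exp_ne_zero (Qform β₁ β₂ κ (z.1, z.2) / 2)
  have hne : ∀ m : ℕ, ((Real.sqrt (Real.pi * (Nat.factorial m)) : ℝ) : ℂ) ≠ 0 :=
    fun m => Complex.ofReal_ne_zero.mpr (sqrt_fact_pos m).ne'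
  have hsne : ∀ x : ℝ, 0 < x → ((Real.sqrt x : ℝ) : ℂ) ≠ 0 :=
    fun x hx => Complex.ofReal_ne_zero.mpr (Real.sqrt_pos.mpr hx).ne'
  rcases Nat.eq_zero_or_pos α₁ with h0 | hpos
  · subst h0
    have e3 : Real.sqrt (Real.pi * (Nat.factorial (α₂+1)))
        = Real.sqrt ((α₂:ℝ)+1) * Real.sqrt (Real.pi * (Nat.factorial α₂)) :=
      sqrt_fact_succ α₂
    norm_num [e3, Nat.factorial]
    field_simp [hne 0, hne α₂, hsne ((α₂:ℝ)+1) (by positivity),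
      hsne (1+(α₂:ℝ)) (by positivity)]
    have h2 : ((Real.sqrt ((α₂:ℝ)+1) : ℝ):ℂ) * ((Real.sqrt ((α₂:ℝ)+1) : ℝ):ℂ)⁻¹ = 1 :=
      mul_inv_cancel₀ (hsne _ (by positivity))
    rw [Real.sqrt_mul (x := ((α₂:ℝ)+1)*Real.pi) (by positivity) (α₂.factorial:ℝ),
      Real.sqrt_mul (x := (α₂:ℝ)+1) (by positivity) Real.pi]
    push_cast
    field_simp [hsne Real.pi Real.pi_pos, hsne ((α₂:ℝ)+1) (by positivity)]
    ring
  · obtain ⟨n, rfl⟩ : ∃ m, α₁ = m + 1 := ⟨α₁ - 1, by omega⟩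
    have e1 : Real.sqrt (Real.pi * (Nat.factorial (n+1)))
        = Real.sqrt ((n:ℝ)+1) * Real.sqrt (Real.pi * (Nat.factorial n)) :=
      sqrt_fact_succ n
    have e2 : Real.sqrt (Real.pi * (Nat.factorial (n+1+1)))
        = Real.sqrt (((n:ℝ)+1)+1) * Real.sqrt (Real.pi * (Nat.factorial (n+1))) := by
      have := sqrt_fact_succ (n+1)
      rw [this]
      norm_num
    have e3 : Real.sqrt (Real.pi * (Nat.factorial (α₂+1)))
        = Real.sqrt ((α₂:ℝ)+1) * Real.sqrt (Real.pi * (Nat.factorial α₂)) :=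
      sqrt_fact_succ α₂
    have hcast : ((n:ℂ)+1) = ((Real.sqrt ((n:ℝ)+1) : ℝ):ℂ) * ((Real.sqrt ((n:ℝ)+1) : ℝ):ℂ) := by
      rw [← Complex.ofReal_mul, Real.mul_self_sqrt (by positivity)]
      push_cast; ring
    simp only [Nat.add_sub_cancel]
    push_cast [e1, e2, e3]
    rw [hcast]
    field_simp [hne n, hne α₂, hsne ((n:ℝ)+1) (by positivity),
      hsne (((n:ℝ)+1)+1) (by positivity), hsne ((α₂:ℝ)+1) (by positivity),
      hsne (1+(n:ℝ)) (by positivity), hsne (2+(n:ℝ)) (by positivity),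
      hsne (1+(α₂:ℝ)) (by positivity)]
    have h1 : ((Real.sqrt ((n:ℝ)+1) : ℝ):ℂ) * ((Real.sqrt ((n:ℝ)+1) : ℝ):ℂ)⁻¹ = 1 :=
      mul_inv_cancel₀ (hsne _ (by positivity))
    have h2 : ((Real.sqrt ((α₂:ℝ)+1) : ℝ):ℂ) * ((Real.sqrt ((α₂:ℝ)+1) : ℝ):ℂ)⁻¹ = 1 :=
      mul_inv_cancel₀ (hsne _ (by positivity))
    have h3 : ((Real.sqrt (((n:ℝ)+1)+1) : ℝ):ℂ) * ((Real.sqrt (((n:ℝ)+1)+1) : ℝ):ℂ)⁻¹ = 1 :=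
      mul_inv_cancel₀ (hsne _ (by positivity))
    set E : ℂ := Complex.exp (Qform β₁ β₂ κ z / 2) with hEdef
    set P : ℂ := (((Real.sqrt Real.pi : ℝ):ℂ))⁻¹ ^ 2 *
      (((Real.sqrt ((Nat.factorial n : ℕ) : ℝ) : ℝ):ℂ))⁻¹ *
      (((Real.sqrt ((Nat.factorial α₂ : ℕ) : ℝ) : ℝ):ℂ))⁻¹ with hPdef
    ring
end
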